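/- Let h_j(q) = ∑_{m > −∞} a_m q^m be a formal Laurent series and define, for a prime p, integer j ≥ 0, and weight k, the operator T_p on (log q)^j·h_j by T_p((log q)^j h_j) = (log q)^j ∑_m b_m q^m with b_m = p^{j+k−1} a_{m/p} + p^{−j} a_{pm} (a_{m/p} = 0 if p ∤ m). Let D act by D((log q)^j h_j) = j(log q)^{j−1} h_j + (log q)^j·(q·dh_j/dq), with the convention that applying D raises weight by 2. Then D ∘ T_p = (1/p)·T_p ∘ D on such series. -/
import Mathlib


/-- The extended Hecke operator `T_p` on the `j`-th component (coefficient of `(log q)^j`)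
of a logarithmic `q`-series of weight `k`: if the component is `h = ∑_m a_m q^m`, the
result has coefficients `b_m = p^{j+k-1} a_{m/p} + p^{-j} a_{pm}` (with `a_{m/p} = 0`
unless `p ∣ m`). -/
noncomputable def stmt13.Tp (p : ℕ) (k : ℤ) (h : ℕ → ℤ → ℚ) : ℕ → ℤ → ℚ :=
  fun j m =>
    (p : ℚ) ^ ((j : ℤ) + k - 1) * (if (p : ℤ) ∣ m then h j (m / p) else 0)
      + (p : ℚ) ^ (-(j : ℤ)) * h j (p * m)

/-- The operator `D = q·d/dq` on a logarithmic `q`-series `∑_j (log q)^j h_j`, recorded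
componentwise: `D((log q)^j h_j) = j (log q)^{j-1} h_j + (log q)^j (q·dh_j/dq)`, so the
`j`-th component of the result is `(j+1)·h_{j+1} + (m ↦ m·(h_j)_m)`. -/
noncomputable def stmt13.D (h : ℕ → ℤ → ℚ) : ℕ → ℤ → ℚ :=
  fun j m => ((j : ℚ) + 1) * h (j + 1) m + (m : ℚ) * h j m

/-- The intertwining identity `D ∘ T_p = (1/p) · T_p ∘ D` on logarithmic `q`-series,
where `D` raises the weight from `k` to `k + 2`. -/
theorem stmt_13 (p : ℕ) (hp : p.Prime) (k : ℤ) (h : ℕ → ℤ → ℚ) (j : ℕ) (m : ℤ) :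
    stmt13.D (stmt13.Tp p k h) j m = (1 / p : ℚ) * stmt13.Tp p (k + 2) (stmt13.D h) j m := by
  have hp0 : (p : ℚ) ≠ 0 := Nat.cast_ne_zero.mpr hp.pos.ne'
  have e1 : ∀ n : ℕ, (p : ℚ) ^ (-(n : ℤ)) = ((p : ℚ) ^ n)⁻¹ := by
    intro n; rw [zpow_neg, zpow_natCast]
  have e2 : ∀ n : ℕ, (p : ℚ) ^ ((n : ℤ) + k - 1) = (p : ℚ) ^ n * (p : ℚ) ^ k / p := by
    intro n
    rw [zpow_sub₀ hp0, zpow_add₀ hp0, zpow_natCast, zpow_one]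
  have e3 : ∀ n : ℕ, (p : ℚ) ^ ((n : ℤ) + (k + 2) - 1) = (p : ℚ) ^ n * (p : ℚ) ^ k * p := by
    intro n
    have : (n : ℤ) + (k + 2) - 1 = ((n : ℤ) + k) + 1 := by ring
    rw [this, zpow_add₀ hp0, zpow_add₀ hp0, zpow_natCast, zpow_one]
  simp only [stmt13.D, stmt13.Tp, e1, e2, e3]
  rcases Classical.em ((p : ℤ) ∣ m) with ⟨c, rfl⟩ | hd
  · have hc : ((p : ℤ) * c) / p = c := by
      rw [Int.mul_ediv_cancel_left _ (by exact_mod_cast hp.pos.ne')]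
    simp only [if_pos (Dvd.intro c rfl), hc]
    push_cast
    field_simp
    ring
  · simp only [if_neg hd]
    push_cast
    field_simp
    ring
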